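/- Let E be a measurable space and let ν₀, ν₁ be probability measures on E that are mutually absolutely continuous with finite Kullback–Leibler divergence KL(ν₁‖ν₀). Let Ω = ℕ → E carry the infinite product measures P₀ = ν₀^⊗ℕ and P₁ = ν₁^⊗ℕ and the natural filtration F generated by the coordinate maps. Let τ be a stopping time with respect to F that is finite almost surely under both P₀ and P₁ and has finite expectation under P₁, and let D : Ω → {0,1} be a decision function measurable with respect to the stopped σ-algebra F_τ. If P₀(D = 1) ≤ ε₁ and P₁(D = 0) ≤ ε₂ with ε₁, ε₂ ∈ (0,1) and ε₂ < 1 − ε₁, then E_{P₁}[τ] · KL(ν₁‖ν₀) ≥ d_KL(ε₂ ‖ 1 − ε₁). -/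

import Mathlib

open MeasureTheory ProbabilityTheory Filter

/-- The binary Kullback–Leibler divergence (in nats) between `a` and `b`:
`d_KL(a‖b) = a·ln(a/b) + (1−a)·ln((1−a)/(1−b))`. -/
noncomputable def binaryKL (a b : ℝ) : ℝ :=
  a * Real.log (a / b) + (1 - a) * Real.log ((1 - a) / (1 - b))

/-- The natural filtration on the sequence space `ℕ → E`: at time `n`, the σ-algebra
generated by the first `n` coordinate maps `ω ↦ ω i` for `i < n` (so at time `n` the
first `n` observations have been seen; at time `0` nothing has been observed). -/
def coordFiltration (E : Type*) [MeasurableSpace E] :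
    Filtration ℕ (inferInstance : MeasurableSpace (ℕ → E)) where
  seq n := ⨆ i ∈ Set.Iio n, MeasurableSpace.comap (fun ω : ℕ → E => ω i) inferInstance
  mono' := fun n m hnm =>
    biSup_mono fun i (hi : i ∈ Set.Iio n) => lt_of_lt_of_le hi hnm
  le' := fun n => iSup₂_le fun i _ => (measurable_pi_apply i).comap_le


section WaldAux

open Finset ENNReal NNReal

variable {E : Type*} [MeasurableSpace E]

/-- Auxiliary: a "stopped value" of a sequence of measurable functions is measurable. -/
lemma measurable_stopped_aux {Ω X : Type*} [MeasurableSpace Ω] [MeasurableSpace X]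
    {u : ℕ → Ω → X} (hu : ∀ n, Measurable (u n)) {τ : Ω → ℕ} (hτm : Measurable τ) :
    Measurable fun ω => u (τ ω) ω := by
  have h : Measurable fun p : Ω × ℕ => u p.2 p.1 :=
    measurable_from_prod_countable_left fun n => hu n
  exact h.comp (measurable_id.prodMk hτm)

/-- Lintegral of a product of coordinate functions over a finite product measure. -/
lemma lintegral_pi_prod (μ : Measure E) [IsProbabilityMeasure μ] :
    ∀ {n : ℕ} (h : Fin n → E → ℝ≥0∞), (∀ i, Measurable (h i)) →
      ∫⁻ x, ∏ i, h i (x i) ∂(Measure.pi fun _ : Fin n => μ) = ∏ i, ∫⁻ y, h i y ∂μ := by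
  intro n
  induction n with
  | zero =>
      intro h _
      simp [lintegral_const]
  | succ n ih =>
      intro h hm
      have mp := measurePreserving_piFinSuccAbove (fun _ : Fin (n + 1) => μ) 0
      set e := MeasurableEquiv.piFinSuccAbove (fun _ : Fin (n + 1) => E) 0 with he
      have hF : Measurable fun x : Fin (n + 1) → E => ∏ i, h i (x i) :=
        Finset.measurable_prod _ fun i _ => (hm i).comp (measurable_pi_apply i)
      have h1 : ∫⁻ x, ∏ i, h i (x i) ∂(Measure.pi fun _ : Fin (n + 1) => μ)
          = ∫⁻ p, ∏ i, h i ((e.symm p) i) ∂(μ.prod (Measure.pi fun _ : Fin n => μ)) := by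
        rw [← (mp.symm e).lintegral_comp hF]
      have h2 : ∀ p : E × (Fin n → E),
          (∏ i, h i ((e.symm p) i)) = h 0 p.1 * ∏ j : Fin n, h j.succ (p.2 j) := by
        rintro ⟨y, z⟩
        rw [Fin.prod_univ_succ]
        have e0 : (e.symm (y, z)) 0 = y := by
          simp [he, MeasurableEquiv.piFinSuccAbove_symm_apply]
        have esucc : ∀ j : Fin n, (e.symm (y, z)) j.succ = z j := by
          intro j
          have : j.succ = (0 : Fin (n+1)).succAbove j := rfl
          rw [this]
          simp [he, MeasurableEquiv.piFinSuccAbove_symm_apply,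
            Fin.insertNth_apply_succAbove]
        rw [e0, Finset.prod_congr rfl fun j _ => by rw [esucc j]]
      rw [h1]
      simp_rw [h2]
      rw [lintegral_prod_mul (f := h 0) (g := fun z : Fin n → E => ∏ j, h j.succ (z j))
        ((hm 0).aemeasurable)
        ((Finset.measurable_prod _ fun j _ => (hm j.succ).comp (measurable_pi_apply j)).aemeasurable)]
      rw [ih _ fun j => hm j.succ, Fin.prod_univ_succ]

lemma coordFiltration_le_comap' (E : Type*) [MeasurableSpace E] (n : ℕ) :
    (⨆ i ∈ Set.Iio n, MeasurableSpace.comap (fun ω : ℕ → E => ω i) inferInstance)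
      ≤ MeasurableSpace.comap (fun ω : ℕ → E => fun i : Fin n => ω i) inferInstance := by
  refine iSup₂_le fun i hi => ?_
  have h : (fun ω : ℕ → E => ω i)
      = (fun x : Fin n → E => x ⟨i, hi⟩) ∘ (fun ω (j : Fin n) => ω j) := rfl
  rw [h, ← MeasurableSpace.comap_comp]
  exact MeasurableSpace.comap_mono (measurable_pi_apply _).comap_le

lemma pi_withDensity (ν₀ ν₁ : Measure E) [IsProbabilityMeasure ν₀] [IsProbabilityMeasure ν₁]
    (hac : ν₁ ≪ ν₀) (n : ℕ) :
    (Measure.pi fun _ : Fin n => ν₁)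
      = (Measure.pi fun _ : Fin n => ν₀).withDensity fun x => ∏ i, ν₁.rnDeriv ν₀ (x i) := by
  have hf : Measurable (ν₁.rnDeriv ν₀) := Measure.measurable_rnDeriv _ _
  refine Measure.pi_eq fun s hs => ?_
  rw [withDensity_apply _ (MeasurableSet.univ_pi hs),
    ← lintegral_indicator (MeasurableSet.univ_pi hs)]
  have hpt : ∀ x : Fin n → E,
      (Set.univ.pi s).indicator (fun x => ∏ i, ν₁.rnDeriv ν₀ (x i)) x
        = ∏ i, (s i).indicator (fun y => ν₁.rnDeriv ν₀ y) (x i) := by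
    intro x
    by_cases hx : x ∈ Set.univ.pi s
    · rw [Set.indicator_of_mem hx]
      exact Finset.prod_congr rfl fun i _ =>
        (Set.indicator_of_mem (hx i (Set.mem_univ i)) _).symm
    · rw [Set.indicator_of_notMem hx]
      rw [Set.mem_univ_pi] at hx
      push_neg at hx
      obtain ⟨i, hxi⟩ := hx
      exact (Finset.prod_eq_zero (Finset.mem_univ i) (Set.indicator_of_notMem hxi _)).symm
  simp_rw [hpt]
  rw [lintegral_pi_prod ν₀ _ fun i => hf.indicator (hs i)]
  exact Finset.prod_congr rfl fun i _ => by
    rw [lintegral_indicator (hs i), Measure.setLIntegral_rnDeriv hac]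

lemma stepA (ν₀ ν₁ : Measure E) [IsProbabilityMeasure ν₀] [IsProbabilityMeasure ν₁]
    (hac : ν₁ ≪ ν₀) (P₀ P₁ : Measure (ℕ → E))
    (hP₀ : ∀ n : ℕ, P₀.map (fun ω (i : Fin n) => ω i) = Measure.pi fun _ : Fin n => ν₀)
    (hP₁ : ∀ n : ℕ, P₁.map (fun ω (i : Fin n) => ω i) = Measure.pi fun _ : Fin n => ν₁)
    (n : ℕ) {s : Set (ℕ → E)}
    (hs : MeasurableSet[⨆ i ∈ Set.Iio n,
      MeasurableSpace.comap (fun ω : ℕ → E => ω i) inferInstance] s) :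
    P₁ s = ∫⁻ ω in s, ∏ i ∈ Finset.range n, ν₁.rnDeriv ν₀ (ω i) ∂P₀ := by
  have hf : Measurable (ν₁.rnDeriv ν₀) := Measure.measurable_rnDeriv _ _
  have hπ : Measurable (fun ω : ℕ → E => fun i : Fin n => ω i) :=
    measurable_pi_lambda _ fun i => measurable_pi_apply _
  have hFmeas : Measurable fun x : Fin n → E => ∏ i, ν₁.rnDeriv ν₀ (x i) :=
    Finset.measurable_prod _ fun i _ => hf.comp (measurable_pi_apply i)
  obtain ⟨B, hB, rfl⟩ :=
    MeasurableSpace.measurableSet_comap.mp (coordFiltration_le_comap' E n s hs)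
  calc P₁ ((fun ω (i : Fin n) => ω i) ⁻¹' B)
      = (P₁.map (fun ω (i : Fin n) => ω i)) B := (Measure.map_apply hπ hB).symm
    _ = ((Measure.pi fun _ : Fin n => ν₀).withDensity fun x => ∏ i, ν₁.rnDeriv ν₀ (x i)) B := by
        rw [hP₁ n, pi_withDensity ν₀ ν₁ hac n]
    _ = ∫⁻ x in B, (fun x : Fin n → E => ∏ i, ν₁.rnDeriv ν₀ (x i)) x
          ∂(P₀.map (fun ω (i : Fin n) => ω i)) := by
        rw [hP₀ n, withDensity_apply _ hB]
    _ = ∫⁻ ω in (fun ω (i : Fin n) => ω i) ⁻¹' B, ∏ i : Fin n, ν₁.rnDeriv ν₀ (ω i) ∂P₀ := by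
        rw [setLIntegral_map hB hFmeas hπ]
    _ = ∫⁻ ω in (fun ω (i : Fin n) => ω i) ⁻¹' B,
          ∏ i ∈ Finset.range n, ν₁.rnDeriv ν₀ (ω i) ∂P₀ :=
        lintegral_congr fun ω => Fin.prod_univ_eq_prod_range (fun i => ν₁.rnDeriv ν₀ (ω i)) n


lemma stepB (ν₀ ν₁ : Measure E) [IsProbabilityMeasure ν₀] [IsProbabilityMeasure ν₁]
    (hac : ν₁ ≪ ν₀) (P₀ P₁ : Measure (ℕ → E))
    (hP₀ : ∀ n : ℕ, P₀.map (fun ω (i : Fin n) => ω i) = Measure.pi fun _ : Fin n => ν₀)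
    (hP₁ : ∀ n : ℕ, P₁.map (fun ω (i : Fin n) => ω i) = Measure.pi fun _ : Fin n => ν₁)
    (τ : (ℕ → E) → ℕ) (hτ : IsStoppingTime (coordFiltration E) (fun ω => (τ ω : WithTop ℕ)))
    {s : Set (ℕ → E)} (hs : MeasurableSet[hτ.measurableSpace] s) :
    P₁ s = ∫⁻ ω in s, ∏ i ∈ Finset.range (τ ω), ν₁.rnDeriv ν₀ (ω i) ∂P₀ := by
  have hsm : ∀ n, MeasurableSet[coordFiltration E n] (s ∩ {ω | τ ω = n}) := by
    intro n
    have hset : {ω : ℕ → E | ((τ ω : ℕ) : WithTop ℕ) = (n : WithTop ℕ)} = {ω | τ ω = n} := by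
      ext ω; simp
    rw [← hset]
    refine (hτ.measurableSet_inter_eq_iff s n).mp ?_
    have h1 : MeasurableSet[hτ.measurableSpace]
        {ω : ℕ → E | ((τ ω : ℕ) : WithTop ℕ) = (n : WithTop ℕ)} := hτ.measurableSet_eq' n
    exact hs.inter h1
  have hambient : ∀ n, MeasurableSet (s ∩ {ω | τ ω = n}) := fun n =>
    (coordFiltration E).le n _ (hsm n)
  have hdecomp : s = ⋃ n, s ∩ {ω | τ ω = n} := by
    ext ω; simp
  have hdisj : Pairwise (Function.onFun Disjoint fun n => s ∩ {ω | τ ω = n}) := by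
    intro m n hmn
    refine Set.disjoint_left.mpr ?_
    rintro ω ⟨_, h1⟩ ⟨_, h2⟩
    exact hmn (Eq.trans (show τ ω = m from h1).symm (show τ ω = n from h2))
  have h1 : P₁ s = ∑' n, P₁ (s ∩ {ω | τ ω = n}) := by
    conv_lhs => rw [hdecomp]
    exact measure_iUnion hdisj hambient
  have h2 : ∫⁻ ω in s, ∏ i ∈ Finset.range (τ ω), ν₁.rnDeriv ν₀ (ω i) ∂P₀
      = ∑' n, ∫⁻ ω in s ∩ {ω | τ ω = n},
          ∏ i ∈ Finset.range (τ ω), ν₁.rnDeriv ν₀ (ω i) ∂P₀ := by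
    conv_lhs => rw [hdecomp]
    exact lintegral_iUnion hambient hdisj _
  rw [h1, h2]
  refine tsum_congr fun n => ?_
  rw [stepA ν₀ ν₁ hac P₀ P₁ hP₀ hP₁ n (hsm n)]
  refine setLIntegral_congr_fun (hambient n) (fun ω hω => ?_)
  have : τ ω = n := hω.2
  simp only [this]

lemma transport_lintegral (ν₁ : Measure E) [IsProbabilityMeasure ν₁]
    (P₁ : Measure (ℕ → E)) [IsProbabilityMeasure P₁]
    (hP₁ : ∀ n : ℕ, P₁.map (fun ω (i : Fin n) => ω i) = Measure.pi fun _ : Fin n => ν₁)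
    (n : ℕ) {B : Set (Fin n → E)} (hB : MeasurableSet B) (h : E → ℝ≥0∞) (hh : Measurable h) :
    ∫⁻ ω, h (ω n) * Set.indicator ((fun ω (i : Fin n) => ω i) ⁻¹' B) 1 ω ∂P₁
      = (∫⁻ y, h y ∂ν₁) * P₁ ((fun ω (i : Fin n) => ω i) ⁻¹' B) := by
  classical
  set π := fun ω : ℕ → E => fun i : Fin (n+1) => ω i with hπdef
  have hπ : Measurable π := measurable_pi_lambda _ fun i => measurable_pi_apply _
  have hπn : Measurable (fun ω : ℕ → E => fun i : Fin n => ω i) :=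
    measurable_pi_lambda _ fun i => measurable_pi_apply _
  set r : (Fin (n+1) → E) → (Fin n → E) := fun x j => x j.castSucc with hrdef
  have hr : Measurable r := measurable_pi_lambda _ fun j => measurable_pi_apply _
  set F : (Fin (n+1) → E) → ℝ≥0∞ :=
    fun x => h (x (Fin.last n)) * Set.indicator B 1 (r x) with hFdef
  have hF : Measurable F :=
    (hh.comp (measurable_pi_apply _)).mul ((measurable_one.indicator hB).comp hr)
  have key : (fun ω : ℕ → E =>
      h (ω n) * Set.indicator ((fun ω (i : Fin n) => ω i) ⁻¹' B) 1 ω) = F ∘ π := by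
    funext ω
    have h1 : r (π ω) = fun i : Fin n => ω i := by
      funext j; exact congrArg ω (Fin.coe_castSucc j)
    simp only [Function.comp_apply, hFdef, h1, Set.indicator_apply, Set.mem_preimage]
    rfl
  have hrw : ∫⁻ ω, h (ω n) * Set.indicator ((fun ω (i : Fin n) => ω i) ⁻¹' B) 1 ω ∂P₁
      = ∫⁻ ω, F (π ω) ∂P₁ := lintegral_congr fun ω => congrFun key ω
  rw [hrw, ← lintegral_map hF hπ, hP₁ (n+1)]
  have mp := measurePreserving_piFinSuccAbove (fun _ : Fin (n + 1) => ν₁) (Fin.last n)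
  set e := MeasurableEquiv.piFinSuccAbove (fun _ : Fin (n + 1) => E) (Fin.last n) with he
  rw [← (mp.symm e).lintegral_comp hF]
  have hpt : ∀ p : E × (Fin n → E), F (e.symm p) = h p.1 * Set.indicator B 1 p.2 := by
    rintro ⟨y, z⟩
    have h2 : e.symm (y, z) (Fin.last n) = y := by
      simp [he, MeasurableEquiv.piFinSuccAbove_symm_apply]
    have h3 : r (e.symm (y, z)) = z := by
      funext j
      have : j.castSucc = (Fin.last n).succAbove j := by rw [Fin.succAbove_last]
      simp only [hrdef, this, he, MeasurableEquiv.piFinSuccAbove_symm_apply]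
      simp [Fin.insertNth_apply_succAbove]
    simp only [hFdef, h2, h3]
  simp_rw [hpt]
  rw [lintegral_prod_mul (f := h) (g := fun z : Fin n → E => Set.indicator B 1 z)
    hh.aemeasurable (measurable_one.indicator hB).aemeasurable]
  congr 1
  rw [lintegral_indicator_one hB, ← hP₁ n, Measure.map_apply hπn hB]

lemma transport_integral (ν₁ : Measure E) [IsProbabilityMeasure ν₁]
    (P₁ : Measure (ℕ → E)) [IsProbabilityMeasure P₁]
    (hP₁ : ∀ n : ℕ, P₁.map (fun ω (i : Fin n) => ω i) = Measure.pi fun _ : Fin n => ν₁)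
    (n : ℕ) {B : Set (Fin n → E)} (hB : MeasurableSet B) (h : E → ℝ) (hh : Measurable h) :
    ∫ ω, h (ω n) * Set.indicator ((fun ω (i : Fin n) => ω i) ⁻¹' B) 1 ω ∂P₁
      = (∫ y, h y ∂ν₁) * (P₁ ((fun ω (i : Fin n) => ω i) ⁻¹' B)).toReal := by
  classical
  set π := fun ω : ℕ → E => fun i : Fin (n+1) => ω i with hπdef
  have hπ : Measurable π := measurable_pi_lambda _ fun i => measurable_pi_apply _
  have hπn : Measurable (fun ω : ℕ → E => fun i : Fin n => ω i) :=
    measurable_pi_lambda _ fun i => measurable_pi_apply _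
  set r : (Fin (n+1) → E) → (Fin n → E) := fun x j => x j.castSucc with hrdef
  have hr : Measurable r := measurable_pi_lambda _ fun j => measurable_pi_apply _
  set F : (Fin (n+1) → E) → ℝ :=
    fun x => h (x (Fin.last n)) * Set.indicator B 1 (r x) with hFdef
  have hF : Measurable F :=
    (hh.comp (measurable_pi_apply _)).mul ((measurable_one.indicator hB).comp hr)
  have key : (fun ω : ℕ → E =>
      h (ω n) * Set.indicator ((fun ω (i : Fin n) => ω i) ⁻¹' B) 1 ω) = F ∘ π := by
    funext ω
    have h1 : r (π ω) = fun i : Fin n => ω i := by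
      funext j; exact congrArg ω (Fin.coe_castSucc j)
    simp only [Function.comp_apply, hFdef, h1, Set.indicator_apply, Set.mem_preimage]
    rfl
  have hrw : ∫ ω, h (ω n) * Set.indicator ((fun ω (i : Fin n) => ω i) ⁻¹' B) 1 ω ∂P₁
      = ∫ ω, F (π ω) ∂P₁ := integral_congr_ae (Filter.Eventually.of_forall fun ω => congrFun key ω)
  rw [hrw, ← integral_map hπ.aemeasurable (by rw [hP₁ (n+1)]; exact hF.aestronglyMeasurable),
    hP₁ (n+1)]
  have mp := measurePreserving_piFinSuccAbove (fun _ : Fin (n + 1) => ν₁) (Fin.last n)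
  set e := MeasurableEquiv.piFinSuccAbove (fun _ : Fin (n + 1) => E) (Fin.last n) with he
  rw [← (mp.symm e).integral_comp e.symm.measurableEmbedding F]
  have hpt : ∀ p : E × (Fin n → E), F (e.symm p) = h p.1 * Set.indicator B 1 p.2 := by
    rintro ⟨y, z⟩
    have h2 : e.symm (y, z) (Fin.last n) = y := by
      simp [he, MeasurableEquiv.piFinSuccAbove_symm_apply]
    have h3 : r (e.symm (y, z)) = z := by
      funext j
      have : j.castSucc = (Fin.last n).succAbove j := by rw [Fin.succAbove_last]
      simp only [hrdef, this, he, MeasurableEquiv.piFinSuccAbove_symm_apply]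
      simp [Fin.insertNth_apply_succAbove]
    simp only [hFdef, h2, h3]
  simp_rw [hpt]
  rw [integral_prod_mul (f := h) (g := fun z : Fin n → E => Set.indicator B 1 z)]
  congr 1
  have : (fun z : Fin n → E => Set.indicator B 1 z)
      = Set.indicator B (fun _ => (1:ℝ)) := by
    funext z; rfl
  rw [this, integral_indicator_const (1:ℝ) hB, ← hP₁ n, measureReal_def, Measure.map_apply hπn hB,
    smul_eq_mul, mul_one]


end WaldAux

open Finset ENNReal NNReal

/-- **Wald's lower bound on the expected sample size, `H₁` side.**
Let `ν₀, ν₁` be mutually absolutely continuous probability measures on `E` with finite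
Kullback–Leibler divergence `KL(ν₁‖ν₀) = ∫ ln(dν₁/dν₀) dν₁`.  Let `P₀` and `P₁` be the
infinite product measures `ν₀^⊗ℕ` and `ν₁^⊗ℕ` on `Ω = ℕ → E` (characterized by their
finite-dimensional marginals), let `τ` be a stopping time for the natural coordinate
filtration which is (everywhere) finite and `P₁`-integrable, and let `D` be a decision
function measurable with respect to the stopped σ-algebra `F_τ`.  If the false positive
probability `P₀(D = 1)` is at most `ε₁` and the false negative probability `P₁(D = 0)`
is at most `ε₂`, with `ε₁, ε₂ ∈ (0,1)` and `ε₂ < 1 − ε₁`, then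
`E_{P₁}[τ] · KL(ν₁‖ν₀) ≥ d_KL(ε₂ ‖ 1 − ε₁)`. -/


theorem wald_expected_sample_size_H1
    {E : Type*} [MeasurableSpace E]
    (ν₀ ν₁ : Measure E) [IsProbabilityMeasure ν₀] [IsProbabilityMeasure ν₁]
    (hac₀₁ : ν₀ ≪ ν₁) (hac₁₀ : ν₁ ≪ ν₀)
    (hKLfin : Integrable (fun x => Real.log (ν₁.rnDeriv ν₀ x).toReal) ν₁)
    (P₀ P₁ : Measure (ℕ → E)) [IsProbabilityMeasure P₀] [IsProbabilityMeasure P₁]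
    (hP₀ : ∀ n : ℕ, P₀.map (fun ω (i : Fin n) => ω i) = Measure.pi fun _ : Fin n => ν₀)
    (hP₁ : ∀ n : ℕ, P₁.map (fun ω (i : Fin n) => ω i) = Measure.pi fun _ : Fin n => ν₁)
    (τ : (ℕ → E) → ℕ)
    (hτ : IsStoppingTime (coordFiltration E) (fun ω => (τ ω : WithTop ℕ)))
    (hτint : Integrable (fun ω => (τ ω : ℝ)) P₁)
    (D : (ℕ → E) → Bool)
    (hD : Measurable[hτ.measurableSpace] D)
    (ε₁ ε₂ : ℝ) (hε₁ : ε₁ ∈ Set.Ioo (0 : ℝ) 1) (hε₂ : ε₂ ∈ Set.Ioo (0 : ℝ) 1)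
    (hlt : ε₂ < 1 - ε₁)
    (hFP : P₀ {ω | D ω = true} ≤ ENNReal.ofReal ε₁)
    (hFN : P₁ {ω | D ω = false} ≤ ENNReal.ofReal ε₂) :
    (∫ ω, (τ ω : ℝ) ∂P₁) * (∫ x, Real.log (ν₁.rnDeriv ν₀ x).toReal ∂ν₁)
      ≥ binaryKL ε₂ (1 - ε₁) := by
  classical
  have hf : Measurable (ν₁.rnDeriv ν₀) := Measure.measurable_rnDeriv _ _
  set g : E → ℝ := fun x => Real.log (ν₁.rnDeriv ν₀ x).toReal with hgdef
  have hg : Measurable g := Real.measurable_log.comp hf.ennreal_toReal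
  set K : ℝ := ∫ x, g x ∂ν₁ with hKdef
  set Λ : (ℕ → E) → ℝ := fun ω => ∑ i ∈ Finset.range (τ ω), g (ω i) with hΛdef
  set L : (ℕ → E) → ℝ≥0∞ := fun ω => ∏ i ∈ Finset.range (τ ω), ν₁.rnDeriv ν₀ (ω i) with hLdef
  have hτm : Measurable τ := by
    refine measurable_to_countable' fun k => ?_
    have h1 : τ ⁻¹' {k} = {ω : ℕ → E | ((τ ω : ℕ) : WithTop ℕ) = (k : WithTop ℕ)} := by ext ω; simp
    rw [h1]
    exact (coordFiltration E).le k _ (hτ.measurableSet_eq k)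
  have hΛm : Measurable Λ :=
    measurable_stopped_aux
      (fun k => Finset.measurable_sum _ fun i _ => hg.comp (measurable_pi_apply i)) hτm
  have hLm : Measurable L :=
    measurable_stopped_aux
      (fun k => Finset.measurable_prod _ fun i _ => hf.comp (measurable_pi_apply i)) hτm
  have hGle : hτ.measurableSpace ≤ (inferInstance : MeasurableSpace (ℕ → E)) :=
    hτ.measurableSpace_le
  have hΛG : Measurable[hτ.measurableSpace] Λ := by
    have hadp : StronglyAdapted (coordFiltration E) (fun k ω => ∑ i ∈ Finset.range k, g (ω i)) := by
      intro k
      have hmeas : Measurable[coordFiltration E k]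
          fun ω : ℕ → E => ∑ i ∈ Finset.range k, g (ω i) := by
        refine Finset.measurable_sum _ fun i hi => ?_
        have hev : Measurable[coordFiltration E k] fun ω : ℕ → E => ω i := by
          have hle : MeasurableSpace.comap (fun ω : ℕ → E => ω i) inferInstance
              ≤ coordFiltration E k :=
            le_biSup (fun j : ℕ => MeasurableSpace.comap (fun ω : ℕ → E => ω j)
              (inferInstance : MeasurableSpace E)) (Set.mem_Iio.mpr (Finset.mem_range.mp hi))
          exact fun s hs => hle _ ⟨s, hs, rfl⟩
        exact hg.comp hev
      exact hmeas.stronglyMeasurable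
    exact measurable_stoppedValue hadp.progMeasurable_of_discrete hτ
  -- the sets {τ > n} and their cylinder representations
  have hT : ∀ n : ℕ, ∃ B : Set (Fin n → E), MeasurableSet B ∧
      (fun ω (i : Fin n) => ω i) ⁻¹' B = {ω | n < τ ω} := by
    intro n
    have h1 : MeasurableSet[coordFiltration E n]
        {ω : ℕ → E | ((τ ω : ℕ) : WithTop ℕ) ≤ (n : WithTop ℕ)} := hτ n
    obtain ⟨B₀, hB₀, hpre⟩ :=
      MeasurableSpace.measurableSet_comap.mp (coordFiltration_le_comap' E n _ h1)
    refine ⟨B₀ᶜ, hB₀.compl, ?_⟩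
    rw [Set.preimage_compl, hpre]
    ext ω; simp [not_le]
  choose Bset hBset hBpre using hT
  have hπnm : ∀ n, Measurable (fun ω : ℕ → E => fun i : Fin n => ω i) := fun n =>
    measurable_pi_lambda _ fun i => measurable_pi_apply _
  have hTm : ∀ n : ℕ, MeasurableSet {ω : ℕ → E | n < τ ω} := fun n => by
    rw [← hBpre n]; exact (hπnm n) (hBset n)
  have hmem : ∀ (n : ℕ) (ω : ℕ → E), n < τ ω → ω ∈ {ω' : ℕ → E | n < τ ω'} := fun n ω h => h
  have hnmem : ∀ (n : ℕ) (ω : ℕ → E), τ ω ≤ n → ω ∉ {ω' : ℕ → E | n < τ ω'} := fun n ω h =>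
    not_lt.mpr h
  have hgnn : (∫⁻ y, (‖g y‖₊ : ℝ≥0∞) ∂ν₁) ≠ ∞ := hKLfin.2.ne
  set C : ℝ≥0∞ := ∫⁻ y, (‖g y‖₊ : ℝ≥0∞) ∂ν₁ with hCdef
  have hlin : ∀ n, ∫⁻ ω, (‖g (ω n)‖₊ : ℝ≥0∞) * Set.indicator {ω' | n < τ ω'} 1 ω ∂P₁
      = C * P₁ {ω' | n < τ ω'} := by
    intro n
    rw [← hBpre n]
    exact transport_lintegral ν₁ P₁ hP₁ n (hBset n) _ hg.enorm
  have hreal : ∀ n, ∫ ω, g (ω n) * Set.indicator {ω' | n < τ ω'} 1 ω ∂P₁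
      = K * (P₁ {ω' | n < τ ω'}).toReal := by
    intro n
    rw [← hBpre n]
    exact transport_integral ν₁ P₁ hP₁ n (hBset n) g hg
  -- the lintegral of τ
  have hτtsum : ∀ ω, ∑' n, Set.indicator {ω' | n < τ ω'} (1 : (ℕ → E) → ℝ≥0∞) ω
      = (τ ω : ℝ≥0∞) := by
    intro ω
    rw [tsum_eq_sum (s := Finset.range (τ ω))
      (fun n hn => Set.indicator_of_notMem (hnmem n ω (by simpa using hn)) _)]
    rw [Finset.sum_congr rfl fun n hn =>
      Set.indicator_of_mem (hmem n ω (Finset.mem_range.mp hn)) _]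
    simp
  have hτlint : ∫⁻ ω, (τ ω : ℝ≥0∞) ∂P₁ = ∑' n, P₁ {ω' | n < τ ω'} := by
    calc ∫⁻ ω, (τ ω : ℝ≥0∞) ∂P₁
        = ∫⁻ ω, ∑' n, Set.indicator {ω' | n < τ ω'} (1 : (ℕ → E) → ℝ≥0∞) ω ∂P₁ :=
          lintegral_congr fun ω => (hτtsum ω).symm
      _ = ∑' n, ∫⁻ ω, Set.indicator {ω' | n < τ ω'} (1 : (ℕ → E) → ℝ≥0∞) ω ∂P₁ :=
          lintegral_tsum fun n => (measurable_one.indicator (hTm n)).aemeasurable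
      _ = ∑' n, P₁ {ω' | n < τ ω'} := tsum_congr fun n => lintegral_indicator_one (hTm n)
  have hτfin : ∫⁻ ω, (τ ω : ℝ≥0∞) ∂P₁ ≠ ∞ := by
    have h2 := hτint.2
    rw [HasFiniteIntegral] at h2
    refine ne_of_lt (lt_of_le_of_lt (le_of_eq (lintegral_congr fun ω => ?_)) h2)
    simp
  have hsum_fin : (∑' n, C * P₁ {ω' | n < τ ω'}) ≠ ∞ := by
    rw [ENNReal.tsum_mul_left, ← hτlint]
    exact ENNReal.mul_ne_top hgnn hτfin
  -- the summands
  have hFnm : ∀ n, Measurable fun ω : ℕ → E =>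
      g (ω n) * Set.indicator {ω' | n < τ ω'} 1 ω := fun n =>
    (hg.comp (measurable_pi_apply n)).mul (measurable_one.indicator (hTm n))
  have hFn_tsum : ∀ ω, ∑' n, g (ω n) * Set.indicator {ω' | n < τ ω'} 1 ω = Λ ω := by
    intro ω
    rw [tsum_eq_sum (s := Finset.range (τ ω)) (fun n hn => by
      rw [Set.indicator_of_notMem (hnmem n ω (by simpa using hn)), mul_zero])]
    refine Finset.sum_congr rfl fun n hn => ?_
    rw [Set.indicator_of_mem (hmem n ω (Finset.mem_range.mp hn)), Pi.one_apply, mul_one]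
  have hFn_nnbound : ∀ n ω,
      (‖g (ω n) * Set.indicator {ω' | n < τ ω'} 1 ω‖₊ : ℝ≥0∞)
        ≤ (‖g (ω n)‖₊ : ℝ≥0∞) * Set.indicator {ω' | n < τ ω'} 1 ω := by
    intro n ω
    by_cases hω : ω ∈ {ω' : ℕ → E | n < τ ω'}
    · rw [Set.indicator_of_mem hω, Set.indicator_of_mem hω, Pi.one_apply, Pi.one_apply,
        mul_one, mul_one]
    · rw [Set.indicator_of_notMem hω, Set.indicator_of_notMem hω, mul_zero, mul_zero]
      simp
  have hFn_lint : ∀ n, ∫⁻ ω, (‖g (ω n) * Set.indicator {ω' | n < τ ω'} 1 ω‖₊ : ℝ≥0∞) ∂P₁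
      ≤ C * P₁ {ω' | n < τ ω'} := fun n => by
    rw [← hlin n]; exact lintegral_mono (hFn_nnbound n)
  have hS1 : (∑' n, ∫⁻ ω, (‖g (ω n) * Set.indicator {ω' | n < τ ω'} 1 ω‖₊ : ℝ≥0∞) ∂P₁) ≠ ∞ :=
    ne_top_of_le_ne_top hsum_fin (ENNReal.tsum_le_tsum hFn_lint)
  -- Wald identity
  have hτreal : ∑' n, (P₁ {ω' | n < τ ω'}).toReal = ∫ ω, (τ ω : ℝ) ∂P₁ := by
    have h0 : ∫ ω, (τ ω : ℝ) ∂P₁ = (∫⁻ ω, (τ ω : ℝ≥0∞) ∂P₁).toReal := by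
      rw [integral_eq_lintegral_of_nonneg_ae
        (Filter.Eventually.of_forall fun ω => by positivity) hτint.1]
      congr 1
      exact lintegral_congr fun ω => ENNReal.ofReal_natCast _
    rw [h0, hτlint, ENNReal.tsum_toReal_eq fun n => measure_ne_top _ _]
  have hΛint : Integrable Λ P₁ := by
    refine ⟨hΛm.aestronglyMeasurable, ?_⟩
    rw [HasFiniteIntegral]
    have hb : ∀ ω, (‖Λ ω‖₊ : ℝ≥0∞)
        ≤ ∑' n, (‖g (ω n)‖₊ : ℝ≥0∞) * Set.indicator {ω' | n < τ ω'} 1 ω := by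
      intro ω
      have heq : ∑' n, (‖g (ω n)‖₊ : ℝ≥0∞) * Set.indicator {ω' | n < τ ω'} 1 ω
          = ∑ i ∈ Finset.range (τ ω), (‖g (ω i)‖₊ : ℝ≥0∞) := by
        rw [tsum_eq_sum (s := Finset.range (τ ω)) (fun n hn => by
          rw [Set.indicator_of_notMem (hnmem n ω (by simpa using hn)), mul_zero])]
        exact Finset.sum_congr rfl fun n hn => by
          rw [Set.indicator_of_mem (hmem n ω (Finset.mem_range.mp hn)), Pi.one_apply, mul_one]
      rw [heq]
      calc (‖Λ ω‖₊ : ℝ≥0∞) ≤ ((∑ i ∈ Finset.range (τ ω), ‖g (ω i)‖₊ : ℝ≥0) : ℝ≥0∞) :=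
            ENNReal.coe_le_coe.mpr (nnnorm_sum_le _ _)
        _ = ∑ i ∈ Finset.range (τ ω), (‖g (ω i)‖₊ : ℝ≥0∞) := ENNReal.coe_finset_sum _ _
    calc ∫⁻ ω, (‖Λ ω‖₊ : ℝ≥0∞) ∂P₁
        ≤ ∫⁻ ω, ∑' n, (‖g (ω n)‖₊ : ℝ≥0∞) * Set.indicator {ω' | n < τ ω'} 1 ω ∂P₁ :=
          lintegral_mono hb
      _ = ∑' n, ∫⁻ ω, (‖g (ω n)‖₊ : ℝ≥0∞) * Set.indicator {ω' | n < τ ω'} 1 ω ∂P₁ :=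
          lintegral_tsum fun n =>
            (((hg.comp (measurable_pi_apply n)).enorm).mul
              (measurable_one.indicator (hTm n))).aemeasurable
      _ = ∑' n, C * P₁ {ω' | n < τ ω'} := tsum_congr hlin
      _ < ∞ := hsum_fin.lt_top
  have hWald : ∫ ω, Λ ω ∂P₁ = (∫ ω, (τ ω : ℝ) ∂P₁) * K := by
    have h1 : ∫ ω, Λ ω ∂P₁
        = ∑' n, ∫ ω, g (ω n) * Set.indicator {ω' | n < τ ω'} 1 ω ∂P₁ := by
      rw [← integral_tsum (fun n => (hFnm n).aestronglyMeasurable) hS1]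
      exact integral_congr_ae (Filter.Eventually.of_forall fun ω => (hFn_tsum ω).symm)
    rw [h1]
    calc ∑' n, ∫ ω, g (ω n) * Set.indicator {ω' | n < τ ω'} 1 ω ∂P₁
        = ∑' n, K * (P₁ {ω' | n < τ ω'}).toReal := tsum_congr hreal
      _ = K * ∑' n, (P₁ {ω' | n < τ ω'}).toReal := tsum_mul_left
      _ = (∫ ω, (τ ω : ℝ) ∂P₁) * K := by rw [hτreal]; ring
  -- change of measure on the stopped σ-algebra
  have hstepB : ∀ {S : Set (ℕ → E)}, MeasurableSet[hτ.measurableSpace] S →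
      P₁ S = ∫⁻ ω in S, L ω ∂P₀ := fun {S} hS =>
    stepB ν₀ ν₁ hac₁₀ P₀ P₁ hP₀ hP₁ τ hτ hS
  have hCHG : ∀ h : (ℕ → E) → ℝ≥0∞, Measurable[hτ.measurableSpace] h →
      ∫⁻ ω, h ω ∂P₁ = ∫⁻ ω, L ω * h ω ∂P₀ := by
    intro h hh
    have htrim : P₁.trim hGle = (P₀.withDensity L).trim hGle := by
      refine @Measure.ext _ hτ.measurableSpace _ _ fun s hs => ?_
      rw [trim_measurableSet_eq hGle hs, trim_measurableSet_eq hGle hs, hstepB hs,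
        withDensity_apply _ (hGle s hs)]
    calc ∫⁻ ω, h ω ∂P₁ = ∫⁻ ω, h ω ∂(P₁.trim hGle) := (lintegral_trim hGle hh).symm
      _ = ∫⁻ ω, h ω ∂((P₀.withDensity L).trim hGle) := by rw [htrim]
      _ = ∫⁻ ω, h ω ∂(P₀.withDensity L) := lintegral_trim hGle hh
      _ = ∫⁻ ω, (L * h) ω ∂P₀ :=
          lintegral_withDensity_eq_lintegral_mul P₀ hLm (hh.mono hGle le_rfl)
      _ = ∫⁻ ω, L ω * h ω ∂P₀ := rfl
  -- a.e. finiteness of the densities of all coordinates under P₀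
  have hfinae : ∀ᵐ ω ∂P₀, ∀ n : ℕ, ν₁.rnDeriv ν₀ (ω n) ≠ ∞ := by
    rw [ae_all_iff]
    intro n
    have hN : MeasurableSet {y : E | ν₁.rnDeriv ν₀ y = ∞} := hf (measurableSet_singleton ∞)
    have hν₀ : ν₀ {y : E | ν₁.rnDeriv ν₀ y = ∞} = 0 := by
      have h1 := Measure.rnDeriv_lt_top ν₁ ν₀
      rw [ae_iff] at h1
      refine Eq.trans ?_ h1
      congr 1
      ext y
      simp [lt_top_iff_ne_top]
    have hmeas2 : MeasurableSet
        ((fun x : Fin (n+1) → E => x (Fin.last n)) ⁻¹' {y | ν₁.rnDeriv ν₀ y = ∞}) :=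
      (measurable_pi_apply _) hN
    have hev : {ω : ℕ → E | ν₁.rnDeriv ν₀ (ω n) = ∞}
        = (fun ω (i : Fin (n+1)) => ω i) ⁻¹'
          ((fun x : Fin (n+1) → E => x (Fin.last n)) ⁻¹' {y | ν₁.rnDeriv ν₀ y = ∞}) := rfl
    have hnotnot : {ω : ℕ → E | ¬ ν₁.rnDeriv ν₀ (ω n) ≠ ∞}
        = {ω : ℕ → E | ν₁.rnDeriv ν₀ (ω n) = ∞} := by ext ω; simp
    rw [ae_iff, hnotnot, hev, ← Measure.map_apply (hπnm (n+1)) hmeas2, hP₀ (n+1)]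
    have mp := measurePreserving_piFinSuccAbove (fun _ : Fin (n + 1) => ν₀) (Fin.last n)
    set e := MeasurableEquiv.piFinSuccAbove (fun _ : Fin (n + 1) => E) (Fin.last n) with he
    have hev2 : ((fun x : Fin (n+1) → E => x (Fin.last n)) ⁻¹' {y | ν₁.rnDeriv ν₀ y = ∞})
        = e ⁻¹' ({y | ν₁.rnDeriv ν₀ y = ∞} ×ˢ (Set.univ : Set (Fin n → E))) := by
      ext x
      simp [he, MeasurableEquiv.piFinSuccAbove_apply]
    rw [hev2, ← Measure.map_apply e.measurable (hN.prod MeasurableSet.univ), mp.map_eq,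
      Measure.prod_prod, hν₀, zero_mul]
  -- pointwise bound L · exp(-Λ) ≤ 1
  have hptbd : ∀ ω : ℕ → E, (∀ i : ℕ, ν₁.rnDeriv ν₀ (ω i) ≠ ∞) →
      L ω * ENNReal.ofReal (Real.exp (-Λ ω)) ≤ 1 := by
    intro ω hfin
    have main : ∀ m : ℕ, (∏ i ∈ Finset.range m, ν₁.rnDeriv ν₀ (ω i)) *
        ENNReal.ofReal (Real.exp (-(∑ i ∈ Finset.range m, g (ω i)))) ≤ 1 := by
      intro m
      induction m with
      | zero => simp
      | succ m ih =>
          rw [Finset.prod_range_succ, Finset.sum_range_succ, neg_add, Real.exp_add,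
            ENNReal.ofReal_mul (Real.exp_pos _).le]
          have hfac : ν₁.rnDeriv ν₀ (ω m) * ENNReal.ofReal (Real.exp (-(g (ω m)))) ≤ 1 := by
            rcases eq_or_ne (ν₁.rnDeriv ν₀ (ω m)) 0 with h0 | h0
            · rw [h0, zero_mul]; exact zero_le_one
            · have htpos : 0 < (ν₁.rnDeriv ν₀ (ω m)).toReal :=
                ENNReal.toReal_pos h0 (hfin m)
              have hexp : Real.exp (-(g (ω m))) = ((ν₁.rnDeriv ν₀ (ω m)).toReal)⁻¹ := by
                rw [Real.exp_neg, hgdef, Real.exp_log htpos]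
              rw [hexp]
              refine le_of_eq ?_
              calc ν₁.rnDeriv ν₀ (ω m) * ENNReal.ofReal (((ν₁.rnDeriv ν₀ (ω m)).toReal)⁻¹)
                  = ENNReal.ofReal ((ν₁.rnDeriv ν₀ (ω m)).toReal
                      * ((ν₁.rnDeriv ν₀ (ω m)).toReal)⁻¹) := by
                    rw [ENNReal.ofReal_mul ENNReal.toReal_nonneg,
                      ENNReal.ofReal_toReal (hfin m)]
                _ = 1 := by rw [mul_inv_cancel₀ (ne_of_gt htpos), ENNReal.ofReal_one]
          calc (∏ i ∈ Finset.range m, ν₁.rnDeriv ν₀ (ω i)) * ν₁.rnDeriv ν₀ (ω m) *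
                (ENNReal.ofReal (Real.exp (-(∑ i ∈ Finset.range m, g (ω i)))) *
                  ENNReal.ofReal (Real.exp (-(g (ω m)))))
              = ((∏ i ∈ Finset.range m, ν₁.rnDeriv ν₀ (ω i)) *
                  ENNReal.ofReal (Real.exp (-(∑ i ∈ Finset.range m, g (ω i))))) *
                (ν₁.rnDeriv ν₀ (ω m) * ENNReal.ofReal (Real.exp (-(g (ω m))))) := by ring
            _ ≤ 1 * 1 := mul_le_mul' ih hfac
            _ = 1 := one_mul 1
    exact main (τ ω)
  -- key per-set inequality
  have hKEY : ∀ S : Set (ℕ → E), MeasurableSet[hτ.measurableSpace] S → ∀ t : ℝ, 0 < t →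
      (P₁ S).toReal * (Real.log t + 1) - t * (P₀ S).toReal ≤ ∫ ω in S, Λ ω ∂P₁ := by
    intro S hS t ht
    have hSm : MeasurableSet S := hGle S hS
    have hexp_measG : Measurable[hτ.measurableSpace] fun ω =>
        ENNReal.ofReal (Real.exp (-Λ ω)) :=
      ENNReal.measurable_ofReal.comp (Real.measurable_exp.comp hΛG.neg)
    have hexp : ∫⁻ ω in S, ENNReal.ofReal (Real.exp (-Λ ω)) ∂P₁ ≤ P₀ S := by
      rw [← lintegral_indicator hSm]
      have hind : Measurable[hτ.measurableSpace]
          (S.indicator fun ω => ENNReal.ofReal (Real.exp (-Λ ω))) := hexp_measG.indicator hS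
      rw [hCHG _ hind]
      have hb : ∀ᵐ ω ∂P₀, L ω * S.indicator (fun ω => ENNReal.ofReal (Real.exp (-Λ ω))) ω
          ≤ S.indicator 1 ω := by
        filter_upwards [hfinae] with ω hω
        by_cases hmemS : ω ∈ S
        · rw [Set.indicator_of_mem hmemS, Set.indicator_of_mem hmemS, Pi.one_apply]
          exact hptbd ω hω
        · rw [Set.indicator_of_notMem hmemS, Set.indicator_of_notMem hmemS, mul_zero]
      calc ∫⁻ ω, L ω * S.indicator (fun ω => ENNReal.ofReal (Real.exp (-Λ ω))) ω ∂P₀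
          ≤ ∫⁻ ω, S.indicator 1 ω ∂P₀ := lintegral_mono_ae hb
        _ = P₀ S := lintegral_indicator_one hSm
    have hexp_int : IntegrableOn (fun ω => Real.exp (-Λ ω)) S P₁ := by
      refine ⟨(Real.measurable_exp.comp hΛm.neg).aestronglyMeasurable, ?_⟩
      rw [HasFiniteIntegral]
      have heq : ∀ ω : ℕ → E, ‖Real.exp (-Λ ω)‖ₑ
          = ENNReal.ofReal (Real.exp (-Λ ω)) := by
        intro ω
        rw [← ofReal_norm, Real.norm_of_nonneg (Real.exp_pos _).le]
      rw [lintegral_congr heq]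
      exact lt_of_le_of_lt hexp (measure_lt_top _ _)
    have hconst_int : IntegrableOn (fun _ : ℕ → E => Real.log t + 1) S P₁ :=
      integrableOn_const (measure_ne_top _ _)
    have hlow_int : IntegrableOn (fun ω => Real.log t + 1 - t * Real.exp (-Λ ω)) S P₁ :=
      hconst_int.sub (hexp_int.const_mul t)
    have hptw : ∀ ω, Real.log t + 1 - t * Real.exp (-Λ ω) ≤ Λ ω := by
      intro ω
      have h1 := Real.log_le_sub_one_of_pos (mul_pos ht (Real.exp_pos (-Λ ω)))
      rw [Real.log_mul (ne_of_gt ht) (ne_of_gt (Real.exp_pos _)), Real.log_exp] at h1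
      linarith
    have hmono : ∫ ω in S, (Real.log t + 1 - t * Real.exp (-Λ ω)) ∂P₁
        ≤ ∫ ω in S, Λ ω ∂P₁ :=
      setIntegral_mono_on hlow_int hΛint.integrableOn hSm fun ω _ => hptw ω
    have hexp_le : ∫ ω in S, Real.exp (-Λ ω) ∂P₁ ≤ (P₀ S).toReal := by
      rw [integral_eq_lintegral_of_nonneg_ae (f := fun ω => Real.exp (-Λ ω))
        (Filter.Eventually.of_forall fun ω => (Real.exp_pos _).le)
        (Real.measurable_exp.comp hΛm.neg).aestronglyMeasurable]
      exact ENNReal.toReal_mono (measure_ne_top _ _) hexp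
    have hcomp : ∫ ω in S, (Real.log t + 1 - t * Real.exp (-Λ ω)) ∂P₁
        = (P₁ S).toReal * (Real.log t + 1) - t * ∫ ω in S, Real.exp (-Λ ω) ∂P₁ := by
      have hmul : ∫ ω in S, t * Real.exp (-Λ ω) ∂P₁
          = t * ∫ ω in S, Real.exp (-Λ ω) ∂P₁ := by
        simpa using integral_smul t fun ω => Real.exp (-Λ ω)
      rw [integral_sub hconst_int (hexp_int.const_mul t), setIntegral_const, measureReal_def, hmul,
        smul_eq_mul, mul_comm]
    calc (P₁ S).toReal * (Real.log t + 1) - t * (P₀ S).toReal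
        ≤ (P₁ S).toReal * (Real.log t + 1) - t * ∫ ω in S, Real.exp (-Λ ω) ∂P₁ := by
          have h2 := mul_le_mul_of_nonneg_left hexp_le ht.le
          linarith
      _ = ∫ ω in S, (Real.log t + 1 - t * Real.exp (-Λ ω)) ∂P₁ := hcomp.symm
      _ ≤ ∫ ω in S, Λ ω ∂P₁ := hmono
  -- assembly
  have hAset : MeasurableSet[hτ.measurableSpace] {ω | D ω = false} := by
    have h1 := hD (measurableSet_singleton false)
    have h2 : D ⁻¹' {false} = {ω | D ω = false} := by ext ω; simp
    rwa [h2] at h1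
  have hAcset : MeasurableSet[hτ.measurableSpace] {ω | D ω = false}ᶜ := hAset.compl
  have hAm : MeasurableSet {ω | D ω = false} := hGle _ hAset
  have hAc_eq : {ω : ℕ → E | D ω = false}ᶜ = {ω | D ω = true} := by
    ext ω; simp
  have ha_compl : (P₁ {ω | D ω = false}ᶜ).toReal = 1 - (P₁ {ω | D ω = false}).toReal := by
    have h1 := measure_add_measure_compl (μ := P₁) hAm
    rw [measure_univ] at h1
    have h2 : (P₁ {ω | D ω = false}).toReal + (P₁ {ω | D ω = false}ᶜ).toReal = 1 := by
      rw [← ENNReal.toReal_add (measure_ne_top _ _) (measure_ne_top _ _), h1,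
        ENNReal.toReal_one]
    linarith
  have hb_compl : (P₀ {ω | D ω = false}ᶜ).toReal = 1 - (P₀ {ω | D ω = false}).toReal := by
    have h1 := measure_add_measure_compl (μ := P₀) hAm
    rw [measure_univ] at h1
    have h2 : (P₀ {ω | D ω = false}).toReal + (P₀ {ω | D ω = false}ᶜ).toReal = 1 := by
      rw [← ENNReal.toReal_add (measure_ne_top _ _) (measure_ne_top _ _), h1,
        ENNReal.toReal_one]
    linarith
  have ha_le : (P₁ {ω | D ω = false}).toReal ≤ ε₂ :=
    ENNReal.toReal_le_of_le_ofReal hε₂.1.le hFN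
  have hb1 : (P₀ {ω | D ω = false}ᶜ).toReal ≤ ε₁ := by
    rw [hAc_eq]; exact ENNReal.toReal_le_of_le_ofReal hε₁.1.le hFP
  have hb_ge : 1 - ε₁ ≤ (P₀ {ω | D ω = false}).toReal := by linarith
  have h1ε₁ : 0 < 1 - ε₁ := by linarith [hε₁.2]
  have ht₁pos : 0 < ε₂ / (1 - ε₁) := div_pos hε₂.1 h1ε₁
  have ht₂pos : 0 < (1 - ε₂) / ε₁ := div_pos (by linarith [hε₂.2]) hε₁.1
  have hk1 := hKEY _ hAset _ ht₁pos
  have hk2 := hKEY _ hAcset _ ht₂pos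
  have hsplit : (∫ ω in {ω | D ω = false}, Λ ω ∂P₁)
      + ∫ ω in {ω | D ω = false}ᶜ, Λ ω ∂P₁ = ∫ ω, Λ ω ∂P₁ :=
    integral_add_compl hAm hΛint
  have ht₁lt : ε₂ / (1 - ε₁) < 1 := (div_lt_one h1ε₁).mpr hlt
  have ht₂gt : 1 < (1 - ε₂) / ε₁ := (one_lt_div hε₁.1).mpr (by linarith)
  have hlogle : Real.log (ε₂ / (1 - ε₁)) ≤ Real.log ((1 - ε₂) / ε₁) :=
    Real.log_le_log ht₁pos (by linarith)
  have hc1 : ε₂ / (1 - ε₁) * (1 - ε₁) = ε₂ := div_mul_cancel₀ ε₂ (ne_of_gt h1ε₁)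
  have hc2 : (1 - ε₂) / ε₁ * ε₁ = 1 - ε₂ := div_mul_cancel₀ _ (ne_of_gt hε₁.1)
  have hmul1 : 0 ≤ (ε₂ - (P₁ {ω | D ω = false}).toReal)
      * (Real.log ((1 - ε₂) / ε₁) - Real.log (ε₂ / (1 - ε₁))) :=
    mul_nonneg (by linarith) (by linarith)
  have hmul2 : 0 ≤ ((P₀ {ω | D ω = false}).toReal - (1 - ε₁))
      * ((1 - ε₂) / ε₁ - ε₂ / (1 - ε₁)) :=
    mul_nonneg (by linarith) (by linarith)
  have hBKL : binaryKL ε₂ (1 - ε₁)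
      = ε₂ * Real.log (ε₂ / (1 - ε₁)) + (1 - ε₂) * Real.log ((1 - ε₂) / ε₁) := by
    have h3 : (1 : ℝ) - (1 - ε₁) = ε₁ := by ring
    rw [binaryKL, h3]
  rw [ge_iff_le, ← hWald, hBKL]
  rw [ha_compl, hb_compl] at hk2
  nlinarith [hk1, hk2, hsplit, hmul1, hmul2, hc1, hc2]
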